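/- The dual iterates of the Generalized Power Method are monotonically increasing in trace: if Λ_{(k)} R_{(k+1)} = Ã R_{(k)} with R_{(k)}, R_{(k+1)} ∈ SO(p)ⁿ and Λ_{(k)} the block-diagonal matrix whose i-th block is U_i Σ_i U_iᵀ from the SVD of (ÃR_{(k)})_i = U_iΣ_iV_iᵀ, then Tr(Λ_{(k+1)}) ≥ Tr(Λ_{(k)}). -/

import Mathlib

open Matrix

/-- The `(i,j)` block of an `np × np` block matrix. -/
def blk {n p : ℕ} (M : Matrix (Fin n × Fin p) (Fin n × Fin p) ℝ) (i j : Fin n) :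
    Matrix (Fin p) (Fin p) ℝ := fun a b => M (i, a) (j, b)

/-- The `i`-th `p × p` block of a stacked `np × p` block column matrix. -/
def blkv {n p : ℕ} (R : Matrix (Fin n × Fin p) (Fin p) ℝ) (i : Fin n) :
    Matrix (Fin p) (Fin p) ℝ := fun a b => R (i, a) b

/-- If `Λ` is block diagonal, `trace (Λ * M)` depends only on the diagonal
blocks of `M`. -/
lemma trace_mul_blk_eq {n p : ℕ}
    (Λ M M' : Matrix (Fin n × Fin p) (Fin n × Fin p) ℝ)
    (hΛ : ∀ i j : Fin n, i ≠ j → blk Λ i j = 0)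
    (h : ∀ i : Fin n, blk M i i = blk M' i i) :
    (Λ * M).trace = (Λ * M').trace := by
  simp only [Matrix.trace, Matrix.diag, Matrix.mul_apply]
  refine Finset.sum_congr rfl fun x _ => Finset.sum_congr rfl fun y _ => ?_
  obtain ⟨i, a⟩ := x
  obtain ⟨j, b⟩ := y
  by_cases hxy : i = j
  · subst hxy
    have hM := congrFun (congrFun (h i) b) a
    simp only [blk] at hM
    rw [hM]
  · have hz := congrFun (congrFun (hΛ i j hxy) a) b
    simp only [blk, Matrix.zero_apply] at hz
    simp [hz]

lemma blk_prod {n p : ℕ} (R S : Matrix (Fin n × Fin p) (Fin p) ℝ) (i j : Fin n) :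
    blk (R * Sᵀ) i j = blkv R i * (blkv S j)ᵀ := by
  ext a b
  simp [blk, blkv, Matrix.mul_apply, Matrix.transpose_apply]

lemma blk_one {n p : ℕ} (i : Fin n) :
    blk (1 : Matrix (Fin n × Fin p) (Fin n × Fin p) ℝ) i i = 1 := by
  ext a b
  simp [blk, Matrix.one_apply, Prod.ext_iff]

/-- Diagonal entries of a PSD matrix are nonnegative, hence so is the trace. -/
lemma psd_trace_nonneg {m : Type*} [Fintype m] [DecidableEq m]
    {M : Matrix m m ℝ} (hM : M.PosSemidef) : 0 ≤ M.trace := by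
  have h : ∀ x : m, 0 ≤ M x x := by
    intro x
    have := hM.dotProduct_mulVec_nonneg (Pi.single x 1)
    simpa [dotProduct, Matrix.mulVec, Pi.single_apply, Finset.sum_ite_eq,
      Finset.sum_ite_eq'] using this
  exact Finset.sum_nonneg fun x _ => h x

/-- The dual iterates of the Generalized Power Method are monotonically
increasing in trace: if `Λₖ R_{k+1} = Ã R_k` and `Λ_{k+1} R_{k+2} = Ã R_{k+1}`
with the `Λ`'s block-diagonal positive semidefinite (as produced by the
blockwise SVD `UΣUᵀ`) and the `R`'s in `SO(p)ⁿ`, then `Tr(Λ_{k+1}) ≥ Tr(Λₖ)`. -/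
theorem stmt5 {n p : ℕ}
    (A : Matrix (Fin n × Fin p) (Fin n × Fin p) ℝ) (hA : Aᵀ = A)
    (Λk Λk1 : Matrix (Fin n × Fin p) (Fin n × Fin p) ℝ)
    (hΛk : Λk.PosSemidef) (hΛk1 : Λk1.PosSemidef)
    (hΛkdiag : ∀ i j : Fin n, i ≠ j → blk Λk i j = 0)
    (hΛk1diag : ∀ i j : Fin n, i ≠ j → blk Λk1 i j = 0)
    (R0 R1 R2 : Matrix (Fin n × Fin p) (Fin p) ℝ)
    (hR0 : ∀ i : Fin n, (blkv R0 i)ᵀ * blkv R0 i = 1 ∧ (blkv R0 i).det = 1)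
    (hR1 : ∀ i : Fin n, (blkv R1 i)ᵀ * blkv R1 i = 1 ∧ (blkv R1 i).det = 1)
    (hR2 : ∀ i : Fin n, (blkv R2 i)ᵀ * blkv R2 i = 1 ∧ (blkv R2 i).det = 1)
    (hrec0 : Λk * R1 = A * R0) (hrec1 : Λk1 * R2 = A * R1) :
    Λk.trace ≤ Λk1.trace := by
  classical
  -- transpose facts over ℝ
  have hsymm : Λk1ᵀ = Λk1 := by
    have := hΛk1.isHermitian.eq
    rwa [show Λk1ᴴ = Λk1ᵀ from by ext a b; simp [Matrix.conjTranspose_apply]] at this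
  -- the blockwise orthogonal matrix D with blocks R0ᵢ R2ᵢᵀ
  set Q : Fin n → Matrix (Fin p) (Fin p) ℝ := fun i => blkv R0 i * (blkv R2 i)ᵀ with hQ
  have hQQ : ∀ i, Q i * (Q i)ᵀ = 1 := by
    intro i
    have h0 : blkv R0 i * (blkv R0 i)ᵀ = 1 := mul_eq_one_comm.mp (hR0 i).1
    have h2 : (blkv R2 i)ᵀ * blkv R2 i = 1 := (hR2 i).1
    calc Q i * (Q i)ᵀ
        = blkv R0 i * ((blkv R2 i)ᵀ * blkv R2 i) * (blkv R0 i)ᵀ := by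
          simp [hQ, Matrix.transpose_mul, Matrix.mul_assoc]
      _ = 1 := by rw [h2, Matrix.mul_one, h0]
  set D : Matrix (Fin n × Fin p) (Fin n × Fin p) ℝ :=
    fun x y => if x.1 = y.1 then Q x.1 x.2 y.2 else 0 with hD
  have hblkD : ∀ i : Fin n, blk D i i = Q i := by
    intro i; ext a b; simp [blk, hD]
  have hDDt : D * Dᵀ = 1 := by
    ext x y
    obtain ⟨i, a⟩ := x
    obtain ⟨j, b⟩ := y
    simp only [Matrix.mul_apply, Matrix.transpose_apply]
    simp only [hD]
    rw [Fintype.sum_prod_type]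
    by_cases hxy : i = j
    · subst hxy
      have hsplit : ∀ k : Fin n, ∀ c : Fin p,
          (if ((i, a) : Fin n × Fin p).1 = ((k, c) : Fin n × Fin p).1
            then Q ((i, a) : Fin n × Fin p).1 ((i, a) : Fin n × Fin p).2 ((k, c) : Fin n × Fin p).2 else 0) *
          (if ((i, b) : Fin n × Fin p).1 = ((k, c) : Fin n × Fin p).1
            then Q ((i, b) : Fin n × Fin p).1 ((i, b) : Fin n × Fin p).2 ((k, c) : Fin n × Fin p).2 else 0)
          = if i = k then Q i a c * Q i b c else 0 := by
        intro k c
        by_cases h : i = k <;> simp [h]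
      simp only [hsplit]
      rw [Finset.sum_comm]
      simp only [Finset.sum_ite_eq, Finset.mem_univ, if_true]
      have hq := congrFun (congrFun (hQQ i) a) b
      simp only [Matrix.mul_apply, Matrix.transpose_apply] at hq
      rw [hq]
      simp [Matrix.one_apply, Prod.ext_iff]
    · have hsplit : ∀ k : Fin n, ∀ c : Fin p,
          (if ((i, a) : Fin n × Fin p).1 = ((k, c) : Fin n × Fin p).1
            then Q ((i, a) : Fin n × Fin p).1 ((i, a) : Fin n × Fin p).2 ((k, c) : Fin n × Fin p).2 else 0) *
          (if ((j, b) : Fin n × Fin p).1 = ((k, c) : Fin n × Fin p).1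
            then Q ((j, b) : Fin n × Fin p).1 ((j, b) : Fin n × Fin p).2 ((k, c) : Fin n × Fin p).2 else 0)
          = 0 := by
        intro k c
        by_cases h : i = k
        · have hj : ¬ j = k := fun hy => hxy (h.trans hy.symm)
          simp [hj]
        · simp [h]
      simp only [hsplit, Finset.sum_const_zero]
      simp [Matrix.one_apply, Prod.ext_iff, hxy]
  -- Step 1: trace Λk = trace (Λk1 * (R0 * R2ᵀ))
  have step1 : Λk.trace = (Λk1 * (R0 * R2ᵀ)).trace := by
    have e1 : Λk.trace = (Λk * (R1 * R1ᵀ)).trace := by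
      rw [show Λk.trace = (Λk * 1).trace by rw [Matrix.mul_one]]
      refine trace_mul_blk_eq _ _ _ hΛkdiag fun i => ?_
      rw [blk_one, blk_prod]
      exact (mul_eq_one_comm.mp (hR1 i).1).symm
    have e2 : R1ᵀ * A = R2ᵀ * Λk1 := by
      have : (A * R1)ᵀ = (Λk1 * R2)ᵀ := by rw [hrec1]
      rwa [Matrix.transpose_mul, Matrix.transpose_mul, hA, hsymm] at this
    calc Λk.trace = (Λk * (R1 * R1ᵀ)).trace := e1
      _ = (Λk * R1 * R1ᵀ).trace := by rw [Matrix.mul_assoc]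
      _ = (A * R0 * R1ᵀ).trace := by rw [hrec0]
      _ = (R1ᵀ * (A * R0)).trace := by rw [Matrix.trace_mul_comm]
      _ = (R1ᵀ * A * R0).trace := by rw [Matrix.mul_assoc]
      _ = (R2ᵀ * Λk1 * R0).trace := by rw [e2]
      _ = (Λk1 * R0 * R2ᵀ).trace := by
          rw [Matrix.trace_mul_cycle, Matrix.trace_mul_cycle]
      _ = (Λk1 * (R0 * R2ᵀ)).trace := by rw [Matrix.mul_assoc]
  -- Step 2: replace R0 * R2ᵀ by its block diagonal D
  have step2 : (Λk1 * (R0 * R2ᵀ)).trace = (Λk1 * D).trace := by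
    refine trace_mul_blk_eq _ _ _ hΛk1diag fun i => ?_
    rw [blk_prod, hblkD]
  -- Step 3: trace (Λk1 * D) ≤ trace Λk1
  have key : 0 ≤ ((1 - Dᵀ) * Λk1 * (1 - Dᵀ)ᵀ).trace := by
    have hps : ((1 - Dᵀ) * Λk1 * (1 - Dᵀ)ᴴ).PosSemidef :=
      hΛk1.mul_mul_conjTranspose_same (1 - Dᵀ)
    have hct : (1 - Dᵀ)ᴴ = (1 - Dᵀ)ᵀ := by
      ext a b; simp [Matrix.conjTranspose_apply]
    rw [hct] at hps
    exact psd_trace_nonneg hps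
  have h2 : (Dᵀ * Λk1).trace = (Λk1 * D).trace := by
    rw [Matrix.trace_mul_comm]
    have : Λk1 * Dᵀ = (D * Λk1)ᵀ := by rw [Matrix.transpose_mul, hsymm]
    rw [this, Matrix.trace_transpose, Matrix.trace_mul_comm]
  have h3 : (Dᵀ * Λk1 * D).trace = Λk1.trace := by
    rw [Matrix.trace_mul_comm, ← Matrix.mul_assoc, hDDt, Matrix.one_mul]
  have expand : ((1 - Dᵀ) * Λk1 * (1 - Dᵀ)ᵀ).trace
      = 2 * Λk1.trace - 2 * (Λk1 * D).trace := by
    have h1 : (1 - Dᵀ) * Λk1 * (1 - Dᵀ)ᵀ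
        = Λk1 - Λk1 * D - Dᵀ * Λk1 + Dᵀ * Λk1 * D := by
      rw [Matrix.transpose_sub, Matrix.transpose_one, Matrix.transpose_transpose]
      noncomm_ring
    rw [h1, Matrix.trace_add, Matrix.trace_sub, Matrix.trace_sub, h2, h3]
    ring
  rw [expand] at key
  rw [step1, step2]
  linarith
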